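/- arXiv:2106.16120 — 2 statements merged into one kernel-verified Lean document; each statement's English description precedes it below -/
import Mathlib

section
/- Let T be a spanning tree on p nodes with incidence matrix B ∈ R^{p×(p-1)}. For any column index s, let B_{[-s]} be B with its s-th column removed and let β_s = (I - B_{[-s]}(B_{[-s]}^T B_{[-s]})^{-1} B_{[-s]}^T) B_s. Then the vector β_s takes exactly two distinct values β*_1 ≠ β*_2 on its p coordinates, and the index sets V_1 = {j : β_{j,s} = β*_1} and V_2 = {j : β_{j,s} = β*_2} are exactly the vertex sets of the two connected components obtained by deleting edge e_s from T. -/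
open scoped Classical

/-- Oriented incidence matrix of a graph on `n+1` vertices with `n` edges. -/
noncomputable def incidenceMat (n : ℕ) (e : Fin n → Fin (n + 1) × Fin (n + 1)) :
    Matrix (Fin (n + 1)) (Fin n) ℝ :=
  Matrix.of fun j s => if (e s).1 = j then 1 else if (e s).2 = j then -1 else 0

namespace StmtAux

open SimpleGraph Matrix Finset

/-- graph with edge `t` deleted -/
noncomputable def Gd {n : ℕ} (e : Fin n → Fin (n + 1) × Fin (n + 1)) (t : Fin n) :
    SimpleGraph (Fin (n + 1)) :=
  SimpleGraph.fromEdgeSet {x | ∃ t', t' ≠ t ∧ x = s((e t').1, (e t').2)}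

variable {n : ℕ} {e : Fin n → Fin (n + 1) × Fin (n + 1)}
  {G : SimpleGraph (Fin (n + 1))}

lemma edge_inj (he : ∀ s, (e s).1 ≠ (e s).2)
    (hG : G = SimpleGraph.fromEdgeSet {x | ∃ s, x = s((e s).1, (e s).2)})
    (hT : G.IsTree) :
    Function.Injective (fun t : Fin n => s((e t).1, (e t).2)) := by
  have hES : G.edgeSet = Set.range (fun t : Fin n => s((e t).1, (e t).2)) := by
    subst hG
    rw [SimpleGraph.edgeSet_fromEdgeSet]
    ext x
    simp only [Set.mem_diff, Set.mem_setOf_eq, Set.mem_range]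
    constructor
    · rintro ⟨⟨t, rfl⟩, -⟩; exact ⟨t, rfl⟩
    · rintro ⟨t, rfl⟩
      exact ⟨⟨t, rfl⟩, by simp [Sym2.isDiag_iff_proj_eq, he t]⟩
  have hcard : Fintype.card G.edgeSet = n := by
    have h1 := hT.card_edgeFinset
    rw [Fintype.card_fin] at h1
    have h2 : G.edgeFinset.card = Fintype.card G.edgeSet := by
      simp [SimpleGraph.edgeFinset, Set.toFinset_card]
    omega
  set f : Fin n → G.edgeSet := fun t => ⟨s((e t).1, (e t).2), by rw [hES]; exact ⟨t, rfl⟩⟩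
  have hsurj : Function.Surjective f := by
    rintro ⟨x, hx⟩
    rw [hES] at hx
    obtain ⟨t, rfl⟩ := hx
    exact ⟨t, rfl⟩
  have hbij : Function.Bijective f :=
    (Fintype.bijective_iff_surjective_and_card f).2 ⟨hsurj, by simp [hcard]⟩
  intro t₁ t₂ h
  exact hbij.1 (Subtype.ext h)

lemma gd_eq (he : ∀ s, (e s).1 ≠ (e s).2)
    (hG : G = SimpleGraph.fromEdgeSet {x | ∃ s, x = s((e s).1, (e s).2)})
    (hT : G.IsTree) (t : Fin n) :
    Gd e t = G \ SimpleGraph.fromEdgeSet {s((e t).1, (e t).2)} := by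
  have hinj := edge_inj he hG hT
  subst hG
  ext a b
  simp only [Gd, SimpleGraph.fromEdgeSet_adj, Set.mem_setOf_eq, SimpleGraph.sdiff_adj,
    Set.mem_singleton_iff]
  constructor
  · rintro ⟨⟨t', ht', heq⟩, hab⟩
    refine ⟨⟨⟨t', heq⟩, hab⟩, ?_⟩
    rintro ⟨h, -⟩
    exact ht' (hinj (heq.symm.trans h))
  · rintro ⟨⟨⟨t', heq⟩, hab⟩, hne⟩
    refine ⟨⟨t', ?_, heq⟩, hab⟩
    rintro rfl
    exact hne ⟨heq, hab⟩

lemma not_reach (he : ∀ s, (e s).1 ≠ (e s).2)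
    (hG : G = SimpleGraph.fromEdgeSet {x | ∃ s, x = s((e s).1, (e s).2)})
    (hT : G.IsTree) (t : Fin n) :
    ¬ (Gd e t).Reachable (e t).1 (e t).2 := by
  have hadj : G.Adj (e t).1 (e t).2 := by
    subst hG
    exact (SimpleGraph.fromEdgeSet_adj _).2 ⟨⟨t, rfl⟩, he t⟩
  have hb : G.IsBridge s((e t).1, (e t).2) :=
    (SimpleGraph.isAcyclic_iff_forall_edge_isBridge.1 hT.IsAcyclic) (G.mem_edgeSet.2 hadj)
  rw [SimpleGraph.isBridge_iff] at hb
  rw [gd_eq he hG hT t]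
  exact hb

lemma adj_gd (he : ∀ s, (e s).1 ≠ (e s).2) (t t' : Fin n) (htt' : t' ≠ t) :
    (Gd e t).Adj (e t').1 (e t').2 := by
  exact (SimpleGraph.fromEdgeSet_adj _).2 ⟨⟨t', htt', rfl⟩, he t'⟩

lemma cover (he : ∀ s, (e s).1 ≠ (e s).2)
    (hG : G = SimpleGraph.fromEdgeSet {x | ∃ s, x = s((e s).1, (e s).2)})
    (hT : G.IsTree) (t : Fin n) (j : Fin (n + 1)) :
    (Gd e t).Reachable (e t).1 j ∨ (Gd e t).Reachable (e t).2 j := by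
  obtain ⟨w⟩ := hT.isConnected ((e t).1) j
  have key : ∀ (a j : Fin (n + 1)) (_ : G.Walk a j),
      ((Gd e t).Reachable (e t).1 a ∨ (Gd e t).Reachable (e t).2 a) →
      ((Gd e t).Reachable (e t).1 j ∨ (Gd e t).Reachable (e t).2 j) := by
    intro a j w
    induction w with
    | nil => exact id
    | @cons a c j h p ih =>
      intro ha
      by_cases hcase : s(a, c) = s((e t).1, (e t).2)
      · rw [Sym2.eq_iff] at hcase
        rcases hcase with ⟨-, rfl⟩ | ⟨-, rfl⟩
        · exact ih (Or.inr (SimpleGraph.Reachable.refl _))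
        · exact ih (Or.inl (SimpleGraph.Reachable.refl _))
      · have hadj : (Gd e t).Adj a c := by
          rw [hG] at h
          rw [SimpleGraph.fromEdgeSet_adj] at h
          obtain ⟨⟨t', heq⟩, hne⟩ := h
          refine (SimpleGraph.fromEdgeSet_adj _).2 ⟨⟨t', ?_, heq⟩, hne⟩
          rintro rfl
          exact hcase heq
        refine ih ?_
        rcases ha with h1 | h1
        · exact Or.inl (h1.trans hadj.reachable)
        · exact Or.inr (h1.trans hadj.reachable)
  exact key _ _ w (Or.inl (SimpleGraph.Reachable.refl _))

lemma classes (he : ∀ s, (e s).1 ≠ (e s).2)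
    (hG : G = SimpleGraph.fromEdgeSet {x | ∃ s, x = s((e s).1, (e s).2)})
    (hT : G.IsTree) (t : Fin n) (j : Fin (n + 1)) :
    ¬ (Gd e t).Reachable (e t).1 j ↔ (Gd e t).Reachable (e t).2 j := by
  constructor
  · intro h; exact (cover he hG hT t j).resolve_left h
  · intro h2 h1
    exact not_reach he hG hT t (h1.trans h2.symm)

lemma dotB (he : ∀ s, (e s).1 ≠ (e s).2) (v : Fin (n + 1) → ℝ) (t' : Fin n) :
    (∑ j, v j * incidenceMat n e j t') = v (e t').1 - v (e t').2 := by
  have hpt : ∀ j, v j * incidenceMat n e j t' =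
      (if (e t').1 = j then v j else 0) + (if (e t').2 = j then -v j else 0) := by
    intro j
    simp only [incidenceMat, Matrix.of_apply]
    by_cases h1 : (e t').1 = j
    · by_cases h2 : (e t').2 = j
      · exact absurd (h1.trans h2.symm) (he t')
      · simp [h1, h2]
    · by_cases h2 : (e t').2 = j
      · simp [h1, h2]
      · simp [h1, h2]
  rw [Finset.sum_congr rfl fun j _ => hpt j, Finset.sum_add_distrib,
    Finset.sum_ite_eq, Finset.sum_ite_eq]
  simp [sub_eq_add_neg]

lemma col_zero (he : ∀ s, (e s).1 ≠ (e s).2)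
    (hG : G = SimpleGraph.fromEdgeSet {x | ∃ s, x = s((e s).1, (e s).2)})
    (hT : G.IsTree) (s : Fin n) (c : {t : Fin n // t ≠ s} → ℝ)
    (hc : (incidenceMat n e).submatrix id (fun t : {t : Fin n // t ≠ s} => t.1) *ᵥ c = 0) :
    c = 0 := by
  set B' := (incidenceMat n e).submatrix id (fun t : {t : Fin n // t ≠ s} => t.1) with hB'
  funext t₀
  obtain ⟨t, ht⟩ := t₀
  set χ : Fin (n + 1) → ℝ := fun j => if (Gd e t).Reachable (e t).1 j then 1 else 0 with hχ
  have key : ∀ t' : {t : Fin n // t ≠ s},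
      (∑ j, χ j * B' j t') = if t'.1 = t then 1 else 0 := by
    intro t'
    have : (∑ j, χ j * B' j t') = χ (e t'.1).1 - χ (e t'.1).2 := dotB he χ t'.1
    rw [this]
    by_cases h : t'.1 = t
    · rw [h, if_pos rfl, hχ]
      simp only [if_pos (SimpleGraph.Reachable.refl _), if_neg (not_reach he hG hT t)]
      norm_num
    · rw [if_neg h]
      have hadj := adj_gd he t t'.1 h
      by_cases hr : (Gd e t).Reachable (e t).1 (e t'.1).1
      · have hr2 : (Gd e t).Reachable (e t).1 (e t'.1).2 := hr.trans hadj.reachable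
        simp [hχ, hr, hr2]
      · have hr2 : ¬ (Gd e t).Reachable (e t).1 (e t'.1).2 := fun h2 =>
          hr (h2.trans hadj.symm.reachable)
        simp [hχ, hr, hr2]
  have h0 : (∑ j, χ j * (B' *ᵥ c) j) = 0 := by rw [hc]; simp
  have hswap : (∑ j, χ j * (B' *ᵥ c) j)
      = ∑ t' : {t : Fin n // t ≠ s}, (∑ j, χ j * B' j t') * c t' := by
    simp only [Matrix.mulVec, dotProduct]
    simp_rw [Finset.mul_sum]
    rw [Finset.sum_comm]
    congr 1
    ext t'
    rw [Finset.sum_mul]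
    congr 1
    ext j
    ring
  rw [hswap] at h0
  have : (∑ t' : {t : Fin n // t ≠ s}, (∑ j, χ j * B' j t') * c t') = c ⟨t, ht⟩ := by
    rw [Finset.sum_congr rfl fun t' _ => by rw [key t']]
    rw [Finset.sum_eq_single (⟨t, ht⟩ : {t : Fin n // t ≠ s})]
    · simp
    · intro b _ hb
      have : b.1 ≠ t := fun h => hb (Subtype.ext h)
      simp [this]
    · intro h; exact absurd (Finset.mem_univ _) h
  rw [this] at h0
  exact h0

lemma gram_inv (he : ∀ s, (e s).1 ≠ (e s).2)
    (hG : G = SimpleGraph.fromEdgeSet {x | ∃ s, x = s((e s).1, (e s).2)})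
    (hT : G.IsTree) (s : Fin n) :
    let B' := (incidenceMat n e).submatrix id (fun t : {t : Fin n // t ≠ s} => t.1)
    (B'.transpose * B')⁻¹ * (B'.transpose * B') = 1 := by
  intro B'
  have hM : ∀ c, (B'.transpose * B') *ᵥ c = 0 → c = 0 := by
    intro c hc
    have h1 : c ⬝ᵥ ((B'.transpose * B') *ᵥ c) = 0 := by rw [hc]; simp
    rw [← Matrix.mulVec_mulVec, Matrix.dotProduct_mulVec, Matrix.vecMul_transpose] at h1
    rw [dotProduct_self_eq_zero] at h1
    exact col_zero he hG hT s c h1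
  have hMinj : Function.Injective ((B'.transpose * B').mulVec) := by
    intro c₁ c₂ h
    have h2 : (B'.transpose * B') *ᵥ (c₁ - c₂) = 0 := by
      rw [Matrix.mulVec_sub, h, sub_self]
    exact sub_eq_zero.1 (hM _ h2)
  have hU : IsUnit (B'.transpose * B') := Matrix.mulVec_injective_iff_isUnit.1 hMinj
  exact Matrix.nonsing_inv_mul _ ((Matrix.isUnit_iff_isUnit_det _).1 hU)

lemma range_lemma (he : ∀ s, (e s).1 ≠ (e s).2) (s : Fin n)
    (a b : Fin (n + 1)) (h : (Gd e s).Reachable a b) :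
    ∃ c : {t : Fin n // t ≠ s} → ℝ,
      (incidenceMat n e).submatrix id (fun t : {t : Fin n // t ≠ s} => t.1) *ᵥ c =
        fun j => (if a = j then (1:ℝ) else 0) - (if b = j then 1 else 0) := by
  set B' := (incidenceMat n e).submatrix id (fun t : {t : Fin n // t ≠ s} => t.1) with hB'
  have col : ∀ (t' : Fin n) (h' : t' ≠ s) (r : ℝ),
      B' *ᵥ (Pi.single ⟨t', h'⟩ r) =
        fun j => r * ((if (e t').1 = j then 1 else 0) - (if (e t').2 = j then 1 else 0)) := by
    intro t' h' r
    rw [Matrix.mulVec_single]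
    funext j
    simp only [hB', Matrix.submatrix_apply, id_eq, incidenceMat, Matrix.of_apply]
    by_cases h1 : (e t').1 = j
    · have h2 : (e t').2 ≠ j := fun h2 => he t' (h1.trans h2.symm)
      simp [h1, h2]
    · by_cases h2 : (e t').2 = j
      · simp [h1, h2]
      · simp [h1, h2]
  obtain ⟨w⟩ := h
  induction w with
  | nil =>
    refine ⟨0, ?_⟩
    rw [Matrix.mulVec_zero]
    funext j
    simp
  | @cons a m b hadj p ih =>
    obtain ⟨c', hc'⟩ := ih
    rw [Gd, SimpleGraph.fromEdgeSet_adj] at hadj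
    obtain ⟨⟨t', ht's, heq⟩, -⟩ := hadj
    rw [Sym2.eq_iff] at heq
    rcases heq with ⟨ha, hm⟩ | ⟨ha, hm⟩
    · refine ⟨Pi.single ⟨t', ht's⟩ 1 + c', ?_⟩
      rw [Matrix.mulVec_add, col t' ht's 1, hc']
      funext j
      subst ha hm
      simp only [Pi.add_apply]
      ring
    · refine ⟨Pi.single ⟨t', ht's⟩ (-1) + c', ?_⟩
      rw [Matrix.mulVec_add, col t' ht's (-1), hc']
      funext j
      subst ha hm
      simp only [Pi.add_apply]
      ring

end StmtAux

open Matrix Finset SimpleGraph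

set_option maxHeartbeats 1000000 in
/-- Traversal-free graph-cut: for a spanning tree `T` with incidence matrix `B`, the
projection `β_s` of column `s` of `B` onto the orthogonal complement of the span of the
other columns takes exactly two distinct values, and the corresponding level sets are
exactly the vertex sets of the two connected components of `T` with edge `e_s` deleted. -/
theorem stmt1 (n : ℕ) (e : Fin n → Fin (n + 1) × Fin (n + 1))
    (he : ∀ s, (e s).1 ≠ (e s).2)
    (G : SimpleGraph (Fin (n + 1)))
    (hG : G = SimpleGraph.fromEdgeSet {x | ∃ s, x = s((e s).1, (e s).2)})
    (hT : G.IsTree) (s : Fin n) :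
    let B := incidenceMat n e
    let B' : Matrix (Fin (n + 1)) {t : Fin n // t ≠ s} ℝ :=
      B.submatrix id (fun t => t.1)
    let β : Fin (n + 1) → ℝ :=
      (1 - B' * (B'.transpose * B')⁻¹ * B'.transpose).mulVec (fun j => B j s)
    let Gdel : SimpleGraph (Fin (n + 1)) :=
      SimpleGraph.fromEdgeSet {x | ∃ t, t ≠ s ∧ x = s((e t).1, (e t).2)}
    ∃ b₁ b₂ : ℝ, b₁ ≠ b₂ ∧ (∀ j, β j = b₁ ∨ β j = b₂) ∧
      {j | β j = b₁} = {j | Gdel.Reachable (e s).1 j} ∧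
      {j | β j = b₂} = {j | Gdel.Reachable (e s).2 j} := by
  intro B B' β Gdel
  classical
  set A : Matrix (Fin (n + 1)) {t : Fin n // t ≠ s} ℝ :=
    (incidenceMat n e).submatrix id (fun t : {t : Fin n // t ≠ s} => t.1) with hA
  have hβdef : β = (1 - A * (A.transpose * A)⁻¹ * A.transpose) *ᵥ
      (fun j => incidenceMat n e j s) := rfl
  have hGdel : Gdel = StmtAux.Gd e s := rfl
  set H := StmtAux.Gd e s with hH
  have hbr := StmtAux.not_reach he hG hT s
  set F1 : Finset (Fin (n + 1)) := Finset.univ.filter (fun j => H.Reachable (e s).1 j) with hF1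
  have hmem1 : (e s).1 ∈ F1 := by
    rw [hF1, Finset.mem_filter]
    exact ⟨Finset.mem_univ _, SimpleGraph.Reachable.refl _⟩
  have hmem2 : (e s).2 ∉ F1 := by
    rw [hF1, Finset.mem_filter]
    rintro ⟨-, h⟩
    exact hbr h
  set n1 : ℝ := (F1.card : ℝ) with hn1def
  set n2 : ℝ := ((F1ᶜ).card : ℝ) with hn2def
  have hn1 : 0 < n1 := by
    have h := Finset.card_pos.2 ⟨_, hmem1⟩
    rw [hn1def]; exact_mod_cast h
  have hn2 : 0 < n2 := by
    have h := Finset.card_pos.2 ⟨_, Finset.mem_compl.2 hmem2⟩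
    rw [hn2def]; exact_mod_cast h
  set v : Fin (n + 1) → ℝ := fun j => if H.Reachable (e s).1 j then 1 / n1 else -1 / n2 with hv
  set u : Fin (n + 1) → ℝ := fun j => incidenceMat n e j s - v j with hu
  -- sums of B-column over the two components
  have hBpt : ∀ j, incidenceMat n e j s =
      (if (e s).1 = j then (1:ℝ) else 0) + (if (e s).2 = j then -1 else 0) := by
    intro j
    simp only [incidenceMat, Matrix.of_apply]
    by_cases h1 : (e s).1 = j
    · have h2 : (e s).2 ≠ j := fun h2 => he s (h1.trans h2.symm)
      simp [h1, h2]
    · by_cases h2 : (e s).2 = j <;> simp [h1, h2]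
  have hsumB : ∀ F : Finset (Fin (n + 1)), (∑ j ∈ F, incidenceMat n e j s) =
      (if (e s).1 ∈ F then (1:ℝ) else 0) + (if (e s).2 ∈ F then -1 else 0) := by
    intro F
    rw [Finset.sum_congr rfl fun j _ => hBpt j, Finset.sum_add_distrib,
      Finset.sum_ite_eq, Finset.sum_ite_eq]
  have hvc1 : ∀ j ∈ F1, v j = 1 / n1 := by
    intro j hj
    rw [hF1, Finset.mem_filter] at hj
    rw [hv]; simp only [if_pos hj.2]
  have hvc2 : ∀ j ∈ F1ᶜ, v j = -1 / n2 := by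
    intro j hj
    rw [Finset.mem_compl, hF1, Finset.mem_filter] at hj
    have hnr : ¬ H.Reachable (e s).1 j := fun h => hj ⟨Finset.mem_univ _, h⟩
    rw [hv]; simp only [if_neg hnr]
  have hu1 : (∑ j ∈ F1, u j) = 0 := by
    simp only [hu]
    rw [Finset.sum_sub_distrib, hsumB, Finset.sum_congr rfl hvc1, Finset.sum_const,
      if_pos hmem1, if_neg hmem2, nsmul_eq_mul, ← hn1def]
    field_simp
    norm_num
  have hu2 : (∑ j ∈ F1ᶜ, u j) = 0 := by
    simp only [hu]
    rw [Finset.sum_sub_distrib, hsumB, Finset.sum_congr rfl hvc2, Finset.sum_const,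
      if_neg (fun hh => (Finset.mem_compl.1 hh) hmem1), if_pos (Finset.mem_compl.2 hmem2), nsmul_eq_mul, ← hn2def]
    field_simp
    norm_num
  -- the difference between the column and v lies in the column span of A
  have hreach : ∀ j : Fin (n + 1), H.Reachable j (if j ∈ F1 then (e s).1 else (e s).2) := by
    intro j
    by_cases hj : j ∈ F1
    · rw [if_pos hj]
      rw [hF1, Finset.mem_filter] at hj
      exact hj.2.symm
    · rw [if_neg hj]
      have hnr : ¬ H.Reachable (e s).1 j := by
        intro h; exact hj (by rw [hF1]; simp [h])
      exact ((StmtAux.classes he hG hT s j).1 hnr).symm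
  choose w hw using fun j => StmtAux.range_lemma he s j _ (hreach j)
  set c : {t : Fin n // t ≠ s} → ℝ := ∑ j, u j • w j with hc
  have hmv : A *ᵥ c = u := by
    have hlin : A *ᵥ c = ∑ j, u j • (A *ᵥ w j) := by
      rw [hc, ← Matrix.mulVecLin_apply, map_sum]
      simp_rw [_root_.map_smul, Matrix.mulVecLin_apply]
    rw [hlin]
    funext k
    rw [Finset.sum_apply]
    have hterm : ∀ j, (u j • (A *ᵥ w j)) k
        = u j * (if j = k then 1 else 0)
          - u j * (if (if j ∈ F1 then (e s).1 else (e s).2) = k then 1 else 0) := by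
      intro j
      rw [Pi.smul_apply]
      rw [show (A *ᵥ w j) k = (if j = k then (1:ℝ) else 0)
          - (if (if j ∈ F1 then (e s).1 else (e s).2) = k then 1 else 0) from congrFun (hw j) k]
      simp [smul_eq_mul, mul_sub]
    rw [Finset.sum_congr rfl fun j _ => hterm j, Finset.sum_sub_distrib]
    have h1 : (∑ j, u j * (if j = k then (1:ℝ) else 0)) = u k := by
      rw [Finset.sum_congr rfl (g := fun j => if j = k then u j else 0)
        (fun j _ => by by_cases h : j = k <;> simp [h])]
      rw [Finset.sum_ite_eq']
      simp
    have h2 : (∑ j, u j * (if (if j ∈ F1 then (e s).1 else (e s).2) = k then (1:ℝ) else 0)) = 0 := by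
      rw [← Finset.sum_add_sum_compl F1]
      have e1 : (∑ j ∈ F1, u j * (if (if j ∈ F1 then (e s).1 else (e s).2) = k then (1:ℝ) else 0))
          = (∑ j ∈ F1, u j) * (if (e s).1 = k then 1 else 0) := by
        rw [Finset.sum_mul]
        refine Finset.sum_congr rfl fun j hj => ?_
        rw [if_pos hj]
      have e2 : (∑ j ∈ F1ᶜ, u j * (if (if j ∈ F1 then (e s).1 else (e s).2) = k then (1:ℝ) else 0))
          = (∑ j ∈ F1ᶜ, u j) * (if (e s).2 = k then 1 else 0) := by
        rw [Finset.sum_mul]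
        refine Finset.sum_congr rfl fun j hj => ?_
        rw [if_neg (Finset.mem_compl.1 hj)]
      rw [e1, e2, hu1, hu2]
      ring
    rw [h1, h2]
    simp
  -- v is orthogonal to the other columns
  have hBtv : A.transpose *ᵥ v = 0 := by
    funext t'
    simp only [Matrix.mulVec, dotProduct, Pi.zero_apply]
    have hpt : ∀ j, A.transpose t' j * v j = v j * incidenceMat n e j t'.1 := by
      intro j; rw [mul_comm]; rfl
    rw [Finset.sum_congr rfl fun j _ => hpt j, StmtAux.dotB he v t'.1]
    have hadj := StmtAux.adj_gd he s t'.1 t'.2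
    by_cases hr : H.Reachable (e s).1 (e t'.1).1
    · have hr2 : H.Reachable (e s).1 (e t'.1).2 := hr.trans hadj.reachable
      simp [hv, hr, hr2]
    · have hr2 : ¬ H.Reachable (e s).1 (e t'.1).2 := fun h2 =>
        hr (h2.trans hadj.symm.reachable)
      simp [hv, hr, hr2]
  have hgram : (A.transpose * A)⁻¹ * (A.transpose * A) = 1 := StmtAux.gram_inv he hG hT s
  -- β = v
  have hBs : (fun j => incidenceMat n e j s) = v + A *ᵥ c := by
    funext j
    rw [Pi.add_apply, hmv]
    simp [hu]
  have hβv : β = v := by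
    rw [hβdef, Matrix.sub_mulVec, Matrix.one_mulVec, hBs]
    have h1 : A.transpose *ᵥ (v + A *ᵥ c) = (A.transpose * A) *ᵥ c := by
      rw [Matrix.mulVec_add, hBtv, Matrix.mulVec_mulVec, zero_add]
    have hproj : (A * (A.transpose * A)⁻¹ * A.transpose) *ᵥ (v + A *ᵥ c) = A *ᵥ c := by
      calc (A * (A.transpose * A)⁻¹ * A.transpose) *ᵥ (v + A *ᵥ c)
          = (A * (A.transpose * A)⁻¹) *ᵥ (A.transpose *ᵥ (v + A *ᵥ c)) :=
            (Matrix.mulVec_mulVec _ _ _).symm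
        _ = (A * (A.transpose * A)⁻¹) *ᵥ ((A.transpose * A) *ᵥ c) := by rw [h1]
        _ = A *ᵥ (((A.transpose * A)⁻¹ * (A.transpose * A)) *ᵥ c) := by
            rw [Matrix.mulVec_mulVec, Matrix.mulVec_mulVec, Matrix.mul_assoc]
        _ = A *ᵥ c := by rw [hgram, Matrix.one_mulVec]
    rw [hproj]
    exact add_sub_cancel_right v (A *ᵥ c)
  -- conclusion
  have hneq : (1 : ℝ) / n1 ≠ -1 / n2 := by
    have hpos : (0:ℝ) < 1 / n1 := div_pos one_pos hn1
    have hneg : -1 / n2 < 0 := div_neg_of_neg_of_pos (by norm_num) hn2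
    linarith
  refine ⟨1 / n1, -1 / n2, hneq, ?_, ?_, ?_⟩
  · intro j
    rw [hβv]
    by_cases hr : H.Reachable (e s).1 j
    · left; rw [hv]; simp only [if_pos hr]
    · right; rw [hv]; simp only [if_neg hr]
  · ext j
    simp only [Set.mem_setOf_eq, hβv, hGdel]
    by_cases hr : H.Reachable (e s).1 j
    · simp [hv, hr]
    · have : v j = -1 / n2 := by rw [hv]; simp only [if_neg hr]
      simp only [this, hr, iff_false]
      exact fun h => hneq h.symm
  · ext j
    simp only [Set.mem_setOf_eq, hβv, hGdel]
    rw [← StmtAux.classes he hG hT s j]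
    by_cases hr : H.Reachable (e s).1 j
    · have : v j = 1 / n1 := by rw [hv]; simp only [if_pos hr]
      simp only [this, hr, not_true, iff_false]
      exact iff_of_false hneq (not_not.2 hr)
    · simp [hv, hr]
      exact hr
end

section
/- Let T be a spanning tree on p vertices with incidence matrix B and Ψ = diag(σ_1²,...,σ²_{p-1}) with all σ_s² > 0. Then for any ε > 0, the matrix Ω̃ = BΨ^{-1}B^T + εJ is positive definite and det(Ω̃) = p²·ε·det(Ψ^{-1}) = p²·ε·Π_{s=1}^{p-1} σ_s^{-2}, where J is the p×p all-ones matrix. -/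
open scoped Classical

namespace Stmt7Aux

open Matrix

variable {n : ℕ}

/-- Integer incidence matrix. -/
def Bz (e : Fin n → Fin (n + 1) × Fin (n + 1)) : Matrix (Fin (n + 1)) (Fin n) ℤ :=
  Matrix.of fun j s => if (e s).1 = j then 1 else if (e s).2 = j then -1 else 0

/-- Signed count of traversals of edge `s` by the walk `w`. -/
noncomputable def wcount (e : Fin n → Fin (n + 1) × Fin (n + 1))
    {G : SimpleGraph (Fin (n + 1))} {u v : Fin (n + 1)} (w : G.Walk u v) (s : Fin n) : ℤ :=
  (w.darts.map fun d => if d.toProd = e s then -1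
      else if d.toProd = ((e s).2, (e s).1) then 1 else 0).sum

lemma wcount_key (e : Fin n → Fin (n + 1) × Fin (n + 1))
    (he : ∀ s, (e s).1 ≠ (e s).2)
    (hinj : Function.Injective fun s => (s((e s).1, (e s).2) : Sym2 (Fin (n + 1))))
    {u v : Fin (n + 1)}
    (w : (SimpleGraph.fromEdgeSet {x | ∃ s, x = s((e s).1, (e s).2)}).Walk u v)
    (k : Fin (n + 1)) :
    ∑ s, wcount e w s * Bz e k s
      = (if v = k then 1 else 0) - (if u = k then 1 else 0) := by
  induction w with
  | nil => simp [wcount]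
  | @cons u b v h w ih =>
    have hstep : ∑ s, (if (u, b) = e s then (-1 : ℤ)
        else if (u, b) = ((e s).2, (e s).1) then 1 else 0) * Bz e k s
        = (if b = k then 1 else 0) - (if u = k then 1 else 0) := by
      rw [SimpleGraph.fromEdgeSet_adj] at h
      obtain ⟨⟨s₀, hs₀⟩, hne⟩ := h
      rw [Finset.sum_eq_single s₀]
      · rw [Sym2.eq_iff] at hs₀
        rcases hs₀ with ⟨h1, h2⟩ | ⟨h1, h2⟩
        · have heq : (u, b) = e s₀ := by
            rw [Prod.ext_iff]; exact ⟨h1, h2⟩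
          rw [if_pos heq]
          subst h1; subst h2
          have hd := he s₀
          simp only [Bz, Matrix.of_apply]
          by_cases hak : (e s₀).1 = k <;> by_cases hbk : (e s₀).2 = k
          · exact absurd (hak.trans hbk.symm) hd
          · simp [hak, hbk]
          · simp [hak, hbk]
          · simp [hak, hbk]
        · have heq : (u, b) = ((e s₀).2, (e s₀).1) := by
            rw [Prod.ext_iff]; exact ⟨h1, h2⟩
          have hne1 : (u, b) ≠ e s₀ := by
            intro hcon
            apply he s₀
            rw [heq] at hcon
            have := congrArg Prod.fst hcon
            have h2' := congrArg Prod.snd hcon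
            simp at this h2'
            rw [this, h2']
          rw [if_neg hne1, if_pos heq]
          subst h1; subst h2
          have hd := he s₀
          simp only [Bz, Matrix.of_apply]
          by_cases hak : (e s₀).1 = k <;> by_cases hbk : (e s₀).2 = k
          · exact absurd (hak.trans hbk.symm) hd
          · simp [hak, hbk]
          · simp [hak, hbk]
          · simp [hak, hbk]
      · intro s _ hs
        have h1 : (u, b) ≠ e s := by
          intro hcon
          apply hs
          apply hinj
          simp only
          rw [← hs₀]
          simp [← hcon]
        have h2 : (u, b) ≠ ((e s).2, (e s).1) := by
          intro hcon
          apply hs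
          apply hinj
          simp only
          rw [← hs₀]
          have hu : u = (e s).2 := congrArg Prod.fst hcon
          have hb : b = (e s).1 := congrArg Prod.snd hcon
          rw [hu, hb, Sym2.eq_swap]
        rw [if_neg h1, if_neg h2, zero_mul]
      · intro hcon
        exact absurd (Finset.mem_univ s₀) hcon
    calc ∑ s, wcount e (SimpleGraph.Walk.cons h w) s * Bz e k s
        = ∑ s, ((if (u, b) = e s then (-1 : ℤ)
            else if (u, b) = ((e s).2, (e s).1) then 1 else 0) * Bz e k s
            + wcount e w s * Bz e k s) := by
          apply Finset.sum_congr rfl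
          intro s _
          simp only [wcount, SimpleGraph.Walk.darts_cons, List.map_cons, List.sum_cons]
          ring
      _ = _ := by
          rw [Finset.sum_add_distrib, hstep, ih]
          ring

/-- Sum-indexed augmented matrix `[B | 1]`. -/
def Ms (e : Fin n → Fin (n + 1) × Fin (n + 1)) :
    Matrix (Fin (n + 1)) (Fin n ⊕ Fin 1) ℤ :=
  Matrix.of fun j i => Sum.elim (fun s => Bz e j s) (fun _ => 1) i

/-- The square augmented matrix. -/
def Mq (e : Fin n → Fin (n + 1) × Fin (n + 1)) :
    Matrix (Fin (n + 1)) (Fin (n + 1)) ℤ :=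
  (Ms e).submatrix id finSumFinEquiv.symm

set_option linter.unreachableTactic false in
set_option linter.unusedTactic false in
set_option linter.unnecessarySeqFocus false in
lemma det_Mq_sq (e : Fin n → Fin (n + 1) × Fin (n + 1))
    (he : ∀ s, (e s).1 ≠ (e s).2)
    (P : Matrix (Fin (n + 1)) (Fin n) ℤ)
    (hPB : ∀ j k, ∑ s, P j s * Bz e k s
      = (if j = k then 1 else 0) - (if (0 : Fin (n + 1)) = k then 1 else 0)) :
    (Mq e).det ^ 2 = ((n : ℤ) + 1) ^ 2 := by
  -- the companion matrix
  set Ns : Matrix (Fin n ⊕ Fin 1) (Fin (n + 1)) ℤ :=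
    Matrix.of fun i k => Sum.elim (fun s => P k s) (fun _ => if k = 0 then 1 else 0) i with hNs
  set U : Matrix (Fin (n + 1)) (Fin 2) ℤ :=
    Matrix.of fun j t => if t = 0 then 1 else if j = 0 then -1 else 0 with hU
  set V : Matrix (Fin 2) (Fin (n + 1)) ℤ :=
    Matrix.of fun t k => if t = 0 then (if k = 0 then 1 else 0) else 1 with hV
  have hMN : Ms e * Ns = 1 + U * V := by
    ext j k
    simp only [Matrix.mul_apply, Matrix.add_apply, Matrix.one_apply]
    rw [Fintype.sum_sum_type]
    simp only [Ms, Ns, Matrix.of_apply, Sum.elim_inl, Sum.elim_inr]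
    have h1 : ∑ s, Bz e j s * P k s = (if k = j then 1 else 0) - (if (0 : Fin (n+1)) = j then 1 else 0) := by
      rw [← hPB k j]
      exact Finset.sum_congr rfl fun s _ => mul_comm _ _
    rw [h1]
    have h2 : ∑ t : Fin 2, U j t * V t k
        = (if k = 0 then 1 else 0) - (if j = 0 then 1 else 0) := by
      rw [Fin.sum_univ_two]
      simp only [U, V, Matrix.of_apply]
      norm_num
      by_cases hj : j = 0 <;> simp [hj] <;> ring
    rw [h2]
    have h0j : (if (0 : Fin (n+1)) = j then (1:ℤ) else 0) = (if j = 0 then 1 else 0) := by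
      simp [eq_comm]
    have hkj : (if k = j then (1:ℤ) else 0) = (if j = k then 1 else 0) := by
      simp [eq_comm]
    rw [h0j, hkj]
    have h3 : ∑ x : Fin 1, (1:ℤ) * (if k = 0 then 1 else 0) = (if k = 0 then 1 else 0) := by
      simp
    rw [h3]
    ring
  have hdetMN : (Ms e * Ns).det = (n : ℤ) + 1 := by
    rw [hMN, Matrix.det_one_add_mul_comm]
    have hVU : (1 + V * U) = Matrix.of fun t t' =>
        (!![2, -1; (n : ℤ) + 1, 0] : Matrix (Fin 2) (Fin 2) ℤ) t t' := by
      ext t t'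
      simp only [Matrix.add_apply, Matrix.one_apply, Matrix.mul_apply, Matrix.of_apply]
      fin_cases t <;> fin_cases t' <;>
        simp [U, V, Finset.sum_ite_eq, Finset.mul_sum] <;>
        norm_num [Finset.sum_ite_eq']
    rw [hVU]
    rw [show (Matrix.of fun t t' => (!![2, -1; (n : ℤ) + 1, 0] : Matrix (Fin 2) (Fin 2) ℤ) t t')
      = !![2, -1; (n : ℤ) + 1, 0] from rfl]
    rw [Matrix.det_fin_two_of]
    ring
  set Nq : Matrix (Fin (n + 1)) (Fin (n + 1)) ℤ := Ns.submatrix finSumFinEquiv.symm id with hNq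
  have hprod : (Mq e).det * Nq.det = (n : ℤ) + 1 := by
    rw [← Matrix.det_mul, Mq, hNq,
      Matrix.submatrix_mul_equiv (Ms e) Ns id finSumFinEquiv.symm id,
      Matrix.submatrix_id_id, hdetMN]
  -- column sums of `Mq`
  have hcol : ∀ i, ∑ k, Mq e k i = if i = Fin.last n then ((n : ℤ) + 1) else 0 := by
    intro i
    rcases hqi : finSumFinEquiv.symm i with s | t
    · have hil : i ≠ Fin.last n := by
        intro hcon
        rw [hcon] at hqi
        have : finSumFinEquiv.symm (Fin.last n) = Sum.inr (0 : Fin 1) := by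
          rw [Equiv.symm_apply_eq]
          rw [finSumFinEquiv_apply_right]
          ext
          simp
        rw [this] at hqi
        cases hqi
      rw [if_neg hil]
      have hBzk : ∀ k, Mq e k i = (if (e s).1 = k then (1:ℤ) else 0) - (if (e s).2 = k then 1 else 0) := by
        intro k
        simp only [Mq, Ms, Matrix.submatrix_apply, id_eq, Matrix.of_apply, hqi, Sum.elim_inl, Bz]
        by_cases h1 : (e s).1 = k <;> by_cases h2 : (e s).2 = k
        · exact absurd (h1.trans h2.symm) (he s)
        · simp [h1, h2]
        · simp [h1, h2]
        · simp [h1, h2]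
      simp only [hBzk]
      rw [Finset.sum_sub_distrib]
      simp
    · have hil : i = Fin.last n := by
        have : i = finSumFinEquiv (Sum.inr t) := by
          rw [← hqi, Equiv.apply_symm_apply]
        rw [this, finSumFinEquiv_apply_right]
        ext
        simp [Fin.fin_one_eq_zero t]
      rw [if_pos hil]
      have : ∀ k, Mq e k i = 1 := by
        intro k
        simp only [Mq, Ms, Matrix.submatrix_apply, id_eq, Matrix.of_apply, hqi, Sum.elim_inr]
      simp only [this]
      simp
  have hdvd : ((n : ℤ) + 1) ∣ (Mq e).det := by
    have h1 : ((Mq e).updateRow 0 (∑ k, (1:ℤ) • Mq e k)).det = (Mq e).det := by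
      rw [Matrix.det_updateRow_sum]
      simp
    have h2 : (∑ k, (1:ℤ) • Mq e k)
        = ((n : ℤ) + 1) • (fun i => if i = Fin.last n then (1:ℤ) else 0) := by
      funext i
      simp only [Finset.sum_apply, one_smul, Pi.smul_apply, smul_eq_mul]
      have hs : (∑ k, Mq e k) i = ∑ k, Mq e k i := Finset.sum_apply i Finset.univ (fun k => Mq e k)
      rw [hs, hcol i]
      by_cases hi : i = Fin.last n <;> simp [hi]
    rw [← h1, h2, Matrix.det_updateRow_smul]
    exact Dvd.intro _ rfl
  obtain ⟨m, hm⟩ := hdvd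
  have hn1 : ((n : ℤ) + 1) ≠ 0 := by positivity
  have hkey : ((n : ℤ) + 1) * (m * Nq.det) = ((n : ℤ) + 1) * 1 := by
    rw [← mul_assoc, ← hm, hprod, mul_one]
  have hm1 : m * Nq.det = 1 := mul_left_cancel₀ hn1 hkey
  have hmu : m = 1 ∨ m = -1 := Int.isUnit_iff.mp (IsUnit.of_mul_eq_one _ hm1)
  rcases hmu with h | h <;> rw [hm, h] <;> ring

end Stmt7Aux

/-- For a spanning tree with incidence matrix `B` and `Ψ = diag(σ²)`, `σ_s² > 0`, and any
`ε > 0`, the matrix `Ω̃ = BΨ⁻¹Bᵀ + εJ` is positive definite with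
`det Ω̃ = p² ε ∏_s σ_s⁻²`. -/
theorem stmt7 (n : ℕ) (e : Fin n → Fin (n + 1) × Fin (n + 1))
    (he : ∀ s, (e s).1 ≠ (e s).2)
    (G : SimpleGraph (Fin (n + 1)))
    (hG : G = SimpleGraph.fromEdgeSet {x | ∃ s, x = s((e s).1, (e s).2)})
    (hT : G.IsTree)
    (σ : Fin n → ℝ) (hσ : ∀ s, 0 < σ s) (ε : ℝ) (hε : 0 < ε) :
    let B := incidenceMat n e
    let Ω : Matrix (Fin (n + 1)) (Fin (n + 1)) ℝ :=
      B * Matrix.diagonal (fun s => (σ s ^ 2)⁻¹) * B.transpose +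
        Matrix.of fun _ _ => ε
    Ω.PosDef ∧ Ω.det = ((n : ℝ) + 1) ^ 2 * ε * ∏ s, (σ s ^ 2)⁻¹ := by
  open Stmt7Aux Matrix in
  intro B Ω
  -- the edge-labelling is injective into `Sym2`
  have hinj : Function.Injective fun s => (s((e s).1, (e s).2) : Sym2 (Fin (n + 1))) := by
    haveI : Fintype G.edgeSet := Fintype.ofFinite _
    set f := fun s => (s((e s).1, (e s).2) : Sym2 (Fin (n + 1))) with hf
    have hES : G.edgeFinset = Finset.univ.image f := by
      ext x
      simp only [SimpleGraph.mem_edgeFinset, Finset.mem_image, Finset.mem_univ, true_and]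
      rw [hG, SimpleGraph.edgeSet_fromEdgeSet]
      constructor
      · rintro ⟨⟨s, hs⟩, -⟩; exact ⟨s, hs.symm⟩
      · rintro ⟨s, hs⟩
        refine ⟨⟨s, hs.symm⟩, ?_⟩
        simp only [Set.mem_setOf_eq, ← hs, hf, Sym2.isDiag_iff_proj_eq]
        exact fun hc => he s hc
    have hcard : G.edgeFinset.card + 1 = n + 1 := by
      have := SimpleGraph.IsTree.card_edgeFinset (G := G) (V := Fin (n + 1)) hT
      simpa using this
    have hcard' : (Finset.univ.image f).card = (Finset.univ : Finset (Fin n)).card := by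
      rw [← hES]
      simp only [Finset.card_univ, Fintype.card_fin]
      omega
    have := Finset.injOn_of_card_image_eq hcard'
    intro a b hab
    exact this (Finset.mem_coe.mpr (Finset.mem_univ a)) (Finset.mem_coe.mpr (Finset.mem_univ b)) hab
  -- walks from the root and the integer matrix `P`
  have hconn : ∀ j : Fin (n + 1), G.Reachable 0 j := fun j =>
    hT.isConnected.preconnected 0 j
  subst hG
  let w : ∀ j, (SimpleGraph.fromEdgeSet {x | ∃ s, x = s((e s).1, (e s).2)}).Walk 0 j :=
    fun j => (hconn j).some
  set P : Matrix (Fin (n + 1)) (Fin n) ℤ := Matrix.of fun j s => wcount e (w j) s with hP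
  have hPB : ∀ j k, ∑ s, P j s * Bz e k s
      = (if j = k then 1 else 0) - (if (0 : Fin (n + 1)) = k then 1 else 0) := by
    intro j k
    exact wcount_key e he hinj (w j) k
  have hdet2 : (Mq e).det ^ 2 = ((n : ℤ) + 1) ^ 2 := det_Mq_sq e he P hPB
  -- pass to the reals
  set Mr : Matrix (Fin (n + 1)) (Fin (n + 1)) ℝ := (Mq e).map (Int.cast) with hMr
  set dvec : Fin (n + 1) → ℝ :=
    fun i => Sum.elim (fun s => (σ s ^ 2)⁻¹) (fun _ => ε) (finSumFinEquiv.symm i) with hdvec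
  set D : Matrix (Fin (n + 1)) (Fin (n + 1)) ℝ := Matrix.diagonal dvec with hD
  have hMrdet : Mr.det ^ 2 = ((n : ℝ) + 1) ^ 2 := by
    have h1 : Mr.det = (((Mq e).det : ℤ) : ℝ) := by
      rw [hMr]
      simpa using (RingHom.map_det (Int.castRingHom ℝ) (Mq e)).symm
    rw [h1]
    exact_mod_cast congrArg (fun z : ℤ => (z : ℝ)) hdet2
  have hcast : ∀ j s, ((Bz e j s : ℤ) : ℝ) = incidenceMat n e j s := by
    intro j s
    simp only [Bz, incidenceMat, Matrix.of_apply]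
    split_ifs <;> norm_num
  -- factorization
  have hfact : Ω = Mr * D * Mrᵀ := by
    have hΩ : Ω = incidenceMat n e * Matrix.diagonal (fun s => (σ s ^ 2)⁻¹) *
        (incidenceMat n e).transpose + Matrix.of fun _ _ => ε := rfl
    rw [hΩ]
    ext j k
    have hL : (incidenceMat n e * Matrix.diagonal (fun s => (σ s ^ 2)⁻¹) *
        (incidenceMat n e).transpose
          + (Matrix.of fun _ _ => ε : Matrix (Fin (n + 1)) (Fin (n + 1)) ℝ)) j k
        = ∑ s, incidenceMat n e j s * (σ s ^ 2)⁻¹ * incidenceMat n e k s + ε := by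
      rw [Matrix.add_apply, Matrix.of_apply, Matrix.mul_apply]
      congr 1
      apply Finset.sum_congr rfl
      intro s _
      rw [Matrix.mul_diagonal, Matrix.transpose_apply]
    rw [hL]
    have hR : (Mr * D * Mrᵀ) j k = ∑ i, Mr j i * dvec i * Mr k i := by
      rw [Matrix.mul_apply]
      apply Finset.sum_congr rfl
      intro i _
      rw [hD, Matrix.mul_diagonal, Matrix.transpose_apply]
    rw [hR]
    rw [← Equiv.sum_comp finSumFinEquiv (fun i => Mr j i * dvec i * Mr k i)]
    rw [Fintype.sum_sum_type]
    have hterm1 : ∀ s : Fin n, Mr j (finSumFinEquiv (Sum.inl s)) *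
        dvec (finSumFinEquiv (Sum.inl s)) * Mr k (finSumFinEquiv (Sum.inl s))
        = incidenceMat n e j s * (σ s ^ 2)⁻¹ * incidenceMat n e k s := by
      intro s
      simp only [hMr, hdvec, Matrix.map_apply, Mq, Ms, Matrix.submatrix_apply, id_eq,
        Equiv.symm_apply_apply, Matrix.of_apply, Sum.elim_inl, hcast]
    have hterm2 : ∀ t : Fin 1, Mr j (finSumFinEquiv (Sum.inr t)) *
        dvec (finSumFinEquiv (Sum.inr t)) * Mr k (finSumFinEquiv (Sum.inr t)) = ε := by
      intro t
      simp only [hMr, hdvec, Matrix.map_apply, Mq, Ms, Matrix.submatrix_apply, id_eq,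
        Equiv.symm_apply_apply, Matrix.of_apply, Sum.elim_inr]
      norm_num
    rw [Finset.sum_congr rfl (fun s _ => hterm1 s), Finset.sum_congr rfl (fun t _ => hterm2 t)]
    simp
  -- determinant of D
  have hdetD : D.det = ε * ∏ s, (σ s ^ 2)⁻¹ := by
    rw [hD, Matrix.det_diagonal]
    rw [← Equiv.prod_comp finSumFinEquiv dvec]
    rw [Fintype.prod_sum_type]
    simp only [hdvec, Equiv.symm_apply_apply, Sum.elim_inl, Sum.elim_inr]
    simp [mul_comm]
  -- determinant claim
  have hdetΩ : Ω.det = ((n : ℝ) + 1) ^ 2 * ε * ∏ s, (σ s ^ 2)⁻¹ := by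
    rw [hfact, Matrix.det_mul, Matrix.det_mul, Matrix.det_transpose, hdetD]
    have : Mr.det * (ε * ∏ s, (σ s ^ 2)⁻¹) * Mr.det
        = Mr.det ^ 2 * (ε * ∏ s, (σ s ^ 2)⁻¹) := by ring
    rw [this, hMrdet]
    ring
  -- positive definiteness
  have hdvecpos : ∀ i, 0 < dvec i := by
    intro i
    simp only [hdvec]
    rcases h : finSumFinEquiv.symm i with s | t
    · simp only [Sum.elim_inl]
      have := hσ s
      positivity
    · simpa using hε
  have hDpd : D.PosDef := by
    rw [hD]
    exact Matrix.posDef_diagonal_iff.mpr hdvecpos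
  have hMrne : Mr.det ≠ 0 := by
    intro hcon
    rw [hcon] at hMrdet
    have : (0:ℝ) < ((n : ℝ) + 1) ^ 2 := by positivity
    rw [← hMrdet] at this
    simp at this
  constructor
  · refine Matrix.posDef_iff_dotProduct_mulVec.mpr ⟨?_, ?_⟩
    · -- hermitian
      have hsym : Ωᵀ = Ω := by
        rw [hfact, Matrix.transpose_mul, Matrix.transpose_mul, Matrix.transpose_transpose,
          Matrix.diagonal_transpose, Matrix.mul_assoc]
      ext j k
      rw [Matrix.conjTranspose_apply, star_trivial]
      conv_rhs => rw [← hsym]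
      rfl
    · intro x hx
      have hy : Mrᵀ *ᵥ x ≠ 0 := by
        intro hcon
        apply hx
        have hinjv : Function.Injective (Mrᵀ).mulVec := by
          rw [Matrix.mulVec_injective_iff_isUnit, Matrix.isUnit_iff_isUnit_det,
            Matrix.det_transpose]
          exact hMrne.isUnit
        apply hinjv
        rw [hcon, Matrix.mulVec_zero]
      have hq : dotProduct (star x) (Ω *ᵥ x)
          = dotProduct (star (Mrᵀ *ᵥ x)) (D *ᵥ (Mrᵀ *ᵥ x)) := by
        rw [hfact]
        rw [← Matrix.mulVec_mulVec, ← Matrix.mulVec_mulVec]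
        rw [star_trivial, star_trivial]
        rw [Matrix.dotProduct_mulVec x Mr, ← Matrix.mulVec_transpose Mr x]
      rw [hq]
      exact hDpd.dotProduct_mulVec_pos hy
  · exact hdetΩ
end
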